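/- Let n ≥ 1, let β ∈ ℂ with β ≠ 0, and let C^{(βⁿ)} = Iₙ − S − βⁿ·e₁·eₙᵀ as above. Let D = diag(1, β, β², …, β^{n−1}) and let P be the cyclic shift permutation matrix, P(i,j) = 1 if i ≡ j+1 (mod n) and 0 otherwise. Then D·C^{(βⁿ)}·D⁻¹ = Iₙ − β·P. -/

import Mathlib

open Matrix

/-- Diagonal scaling of the βⁿ-circulant modification of the implicit-Euler
time-stepping matrix: D C^{(βⁿ)} D⁻¹ = Iₙ − β P, where D = diag(1, β, …, β^{n−1})
and P is the cyclic shift permutation matrix. -/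
theorem alpha_circulant_diagonal_scaling
    (n : ℕ) (hn : 1 ≤ n) (β : ℂ) (hβ : β ≠ 0)
    (S : Matrix (Fin n) (Fin n) ℂ)
    (hS : ∀ i j : Fin n, S i j = if (i : ℕ) = (j : ℕ) + 1 then 1 else 0)
    (E : Matrix (Fin n) (Fin n) ℂ)
    (hE : ∀ i j : Fin n, E i j = if (i : ℕ) = 0 ∧ (j : ℕ) = n - 1 then 1 else 0)
    (C : Matrix (Fin n) (Fin n) ℂ) (hC : C = 1 - S - β ^ n • E)
    (D : Matrix (Fin n) (Fin n) ℂ) (hD : D = Matrix.diagonal fun i : Fin n => β ^ (i : ℕ))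
    (P : Matrix (Fin n) (Fin n) ℂ)
    (hP : ∀ i j : Fin n, P i j = if (i : ℕ) % n = ((j : ℕ) + 1) % n then 1 else 0) :
    D * C * D⁻¹ = 1 - β • P := by
  subst hC hD
  have hDinv : (Matrix.diagonal fun i : Fin n => β ^ (i : ℕ))⁻¹
      = Matrix.diagonal (fun i : Fin n => (β ^ (i : ℕ))⁻¹) := by
    apply Matrix.inv_eq_right_inv
    rw [Matrix.diagonal_mul_diagonal]
    ext i j
    by_cases h : i = j
    · subst h
      simp [Matrix.one_apply, mul_inv_cancel₀ (pow_ne_zero (i:ℕ) hβ)]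
    · simp [Matrix.one_apply, h]
  rw [hDinv]
  ext i j
  simp only [Matrix.diagonal_mul, Matrix.mul_diagonal, Matrix.sub_apply, Matrix.one_apply,
    Matrix.smul_apply, hS i j, hE i j, hP i j, smul_eq_mul]
  have hβi : β ^ (i:ℕ) ≠ 0 := pow_ne_zero _ hβ
  have hβj : β ^ (j:ℕ) ≠ 0 := pow_ne_zero _ hβ
  have hi : (i:ℕ) % n = (i:ℕ) := Nat.mod_eq_of_lt i.isLt
  rw [hi]
  by_cases hj1 : (j:ℕ) + 1 < n
  · rw [Nat.mod_eq_of_lt hj1]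
    have hjE : ¬ ((i:ℕ) = 0 ∧ (j:ℕ) = n - 1) := by
      rintro ⟨h0, hjn⟩; omega
    by_cases hij : (i:ℕ) = (j:ℕ) + 1
    · have hne : ¬ ((i:ℕ) = (j:ℕ)) := by omega
      have hij' : i ≠ j := fun h => hne (by rw [h])
      simp [hij, hjE, hij', Fin.ext_iff, hne]
      field_simp
      rw [pow_succ]
    · by_cases he : i = j
      · subst he
        simp [hij, hjE, Fin.ext_iff]
        exact mul_inv_cancel₀ hβi
      · have hne : ¬ ((i:ℕ) = (j:ℕ)) := fun h => he (Fin.ext h)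
        simp [hij, hjE, he, Fin.ext_iff, hne]
  · have hjn : (j:ℕ) = n - 1 := by omega
    have hn1 : (j:ℕ) + 1 = n := by omega
    rw [hn1, Nat.mod_self]
    have hij : ¬ ((i:ℕ) = (j:ℕ) + 1) := by omega
    by_cases hi0 : (i:ℕ) = 0
    · by_cases hone : n = 1
      · have he : i = j := Fin.ext (by omega)
        subst he
        simp [hij, hi0, hjn, hone]
      · have hne : (i:ℕ) ≠ (j:ℕ) := by omega
        have he : i ≠ j := fun h => hne (by rw [h])
        simp [hij, hi0, hjn, he, Fin.ext_iff, hne]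
        field_simp [hi0]
        have hpow : β ^ n = β * β ^ (n - 1) := by
          conv_lhs => rw [show n = (n - 1) + 1 from by omega]
          rw [pow_succ]; ring
        rw [if_neg (by omega : ¬(0 : ℕ) = n), hpow]
        ring
    · by_cases he : i = j
      · subst he
        simp [hij, hi0, Fin.ext_iff]
        rw [if_neg (by omega : ¬(i:ℕ) = n)]
        field_simp
        simp
      · have hne : (i:ℕ) ≠ (j:ℕ) := fun h => he (Fin.ext h)
        simp [hij, hi0, he, Fin.ext_iff, hne]
        intro h
        exact absurd h (Nat.ne_of_lt i.isLt)
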